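/- Let τ be a set partition of [k] that contains the set partition 123 of [3] (a single block of size 3) or the set partition 12/34 of [4] (blocks {1,2} and {3,4}). Then liminf_{n→∞} log(A_n(τ)) / (n log n) ≥ 1/2. -/

import Mathlib

/-- `i` and `j` lie in the same block of the set partition `P` of `[n] = {1, …, n}`. -/
def SameBlock {n : ℕ} (P : Finpartition (Finset.Icc 1 n)) (i j : ℕ) : Prop :=
  ∃ B ∈ P.parts, i ∈ B ∧ j ∈ B

instance {n : ℕ} (P : Finpartition (Finset.Icc 1 n)) (i j : ℕ) : Decidable (SameBlock P i j) :=
  inferInstanceAs (Decidable (∃ B ∈ P.parts, i ∈ B ∧ j ∈ B))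

/-- The set partition `σ` of `[n]` contains the set partition `τ` of `[k]`: there is a
strictly increasing map `f : [k] → [n]` such that `i, j` lie in the same block of `τ`
iff `f i, f j` lie in the same block of `σ`.  Otherwise `σ` avoids `τ`. -/
def SetPartContains {n k : ℕ} (σ : Finpartition (Finset.Icc 1 n))
    (τ : Finpartition (Finset.Icc 1 k)) : Prop :=
  ∃ f : ℕ → ℕ,
    (∀ i ∈ Finset.Icc 1 k, f i ∈ Finset.Icc 1 n) ∧
    (∀ i ∈ Finset.Icc 1 k, ∀ j ∈ Finset.Icc 1 k, i < j → f i < f j) ∧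
    (∀ i ∈ Finset.Icc 1 k, ∀ j ∈ Finset.Icc 1 k,
      (SameBlock τ i j ↔ SameBlock σ (f i) (f j)))

/-- `A n τ` is the number of set partitions of `[n]` avoiding `τ`. -/
noncomputable def A (n : ℕ) {k : ℕ} (τ : Finpartition (Finset.Icc 1 k)) : ℕ :=
  Nat.card {σ : Finpartition (Finset.Icc 1 n) // ¬ SetPartContains σ τ}

/-- `τ` is the layered partition `L_{a 0, …, a (r-1)}` of `[k]`, whose blocks are the
consecutive intervals `{1, …, a 0}, {a 0 + 1, …, a 0 + a 1}, …` of lengths `a 0, …, a (r-1)`. -/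
def IsLayered {k : ℕ} (r : ℕ) (a : ℕ → ℕ) (τ : Finpartition (Finset.Icc 1 k)) : Prop :=
  τ.parts = (Finset.range r).image
    (fun j => Finset.Icc ((∑ i ∈ Finset.range j, a i) + 1) (∑ i ∈ Finset.range (j + 1), a i))

/-- A uniform set partition of `[n]` with block size `m`: it consists of `n/m` blocks each of
size `m`, and for every `0 ≤ j < m` the interval `S_j = {j·(n/m)+1, …, (j+1)·(n/m)}` contains
exactly one element from each block. -/
def IsUniform (n m : ℕ) (σ : Finpartition (Finset.Icc 1 n)) : Prop :=
  σ.parts.card = n / m ∧ (∀ B ∈ σ.parts, B.card = m) ∧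
    ∀ j < m, ∀ B ∈ σ.parts,
      (Finset.Icc (j * (n / m) + 1) ((j + 1) * (n / m)) ∩ B).card = 1

/-- `P` is the permutation partition of `[2m]` associated to the permutation `π` of `[m]`:
its blocks are `{i, m + π i}` for `i ∈ [m]` (with `Fin m` representing `[m]` via `i ↦ i + 1`). -/
def IsPermPartition (m : ℕ) (π : Equiv.Perm (Fin m))
    (P : Finpartition (Finset.Icc 1 (2 * m))) : Prop :=
  P.parts = Finset.univ.image
    (fun i : Fin m => ({(i : ℕ) + 1, m + (π i : ℕ) + 1} : Finset ℕ))


open Finset Filter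

def permParts (n : ℕ) (g : Equiv.Perm (Fin (n / 2))) : Finset (Finset ℕ) :=
  (Finset.univ.image fun i : Fin (n / 2) =>
      ({(i : ℕ) + 1, n / 2 + (g i : ℕ) + 1} : Finset ℕ)) ∪
    ((Finset.Icc (2 * (n / 2) + 1) n).image fun x => ({x} : Finset ℕ))

lemma mem_permParts {n : ℕ} {g : Equiv.Perm (Fin (n / 2))} {B : Finset ℕ} :
    B ∈ permParts n g ↔
      (∃ i : Fin (n / 2), B = {(i : ℕ) + 1, n / 2 + (g i : ℕ) + 1}) ∨
        ∃ x, (2 * (n / 2) + 1 ≤ x ∧ x ≤ n) ∧ B = {x} := by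
  simp [permParts, Finset.mem_union, Finset.mem_image, Finset.mem_Icc, eq_comm]

def permPartition (n : ℕ) (g : Equiv.Perm (Fin (n / 2))) :
    Finpartition (Finset.Icc 1 n) where
  parts := permParts n g
  supIndep := by
    rw [Finset.supIndep_iff_pairwiseDisjoint]
    intro B hB C hC hBC
    simp only [Finset.mem_coe] at hB hC
    rw [Function.onFun, Finset.disjoint_left]
    intro a haB haC
    rcases mem_permParts.1 hB with ⟨i, rfl⟩ | ⟨x, hx, rfl⟩ <;>
      rcases mem_permParts.1 hC with ⟨j, rfl⟩ | ⟨y, hy, rfl⟩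
    · have hi : (i : ℕ) < n / 2 := i.isLt
      have hj : (j : ℕ) < n / 2 := j.isLt
      simp only [id, Finset.mem_insert, Finset.mem_singleton] at haB haC
      have hne : i ≠ j := fun hh => hBC (by rw [hh])
      rcases haB with rfl | rfl <;> rcases haC with h | h
      · exact hne (Fin.ext (by omega))
      · omega
      · omega
      · exact hne (g.injective (Fin.ext (by omega)))
    · have hi : (i : ℕ) < n / 2 := i.isLt
      have hpi : (g i : ℕ) < n / 2 := (g i).isLt
      simp only [id, Finset.mem_insert, Finset.mem_singleton] at haB haC
      omega
    · have hj : (j : ℕ) < n / 2 := j.isLt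
      have hpj : (g j : ℕ) < n / 2 := (g j).isLt
      simp only [id, Finset.mem_insert, Finset.mem_singleton] at haB haC
      omega
    · simp only [id, Finset.mem_singleton] at haB haC
      exact hBC (by rw [← haB, ← haC])
  sup_parts := by
    apply le_antisymm
    · apply Finset.sup_le
      intro B hB
      rcases mem_permParts.1 hB with ⟨i, rfl⟩ | ⟨x, hx, rfl⟩
      · have hi : (i : ℕ) < n / 2 := i.isLt
        have hpi : (g i : ℕ) < n / 2 := (g i).isLt
        have h2 : 2 * (n / 2) ≤ n := Nat.mul_div_le n 2 |>.trans_eq (by ring_nf) |>.trans (le_refl n)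
        intro a ha
        simp only [id, Finset.mem_insert, Finset.mem_singleton] at ha
        rw [Finset.mem_Icc]
        omega
      · intro a ha
        simp only [id, Finset.mem_singleton] at ha
        rw [Finset.mem_Icc]
        omega
    · intro x hx
      rw [Finset.mem_Icc] at hx
      rw [Finset.mem_sup]
      have h2 : 2 * (n / 2) ≤ n := by omega
      by_cases hx1 : x ≤ n / 2
      · set i : Fin (n / 2) := ⟨x - 1, by omega⟩ with hi
        refine ⟨{(i : ℕ) + 1, n / 2 + (g i : ℕ) + 1},
          mem_permParts.2 (Or.inl ⟨i, rfl⟩), ?_⟩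
        simp only [id, Finset.mem_insert, Finset.mem_singleton, hi]
        left; omega
      · by_cases hx2 : x ≤ 2 * (n / 2)
        · set j : Fin (n / 2) := ⟨x - n / 2 - 1, by omega⟩ with hj
          refine ⟨{((g.symm j : ℕ)) + 1, n / 2 + (g (g.symm j) : ℕ) + 1},
            mem_permParts.2 (Or.inl ⟨g.symm j, rfl⟩), ?_⟩
          have : g (g.symm j) = j := g.apply_symm_apply j
          rw [this]
          simp only [id, Finset.mem_insert, Finset.mem_singleton, hj]
          right; omega
        · exact ⟨{x}, mem_permParts.2 (Or.inr ⟨x, ⟨by omega, by omega⟩, rfl⟩),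
            Finset.mem_singleton_self x⟩
  bot_notMem := by
    intro hbot
    rcases mem_permParts.1 hbot with ⟨i, hi⟩ | ⟨x, hx, hsing⟩
    · have : (i : ℕ) + 1 ∈ (⊥ : Finset ℕ) := by
        rw [hi]; simp
      simp at this
    · have : x ∈ (⊥ : Finset ℕ) := by rw [hsing]; simp
      simp at this

lemma setPartContains_trans {n k l : ℕ} {σ : Finpartition (Finset.Icc 1 n)}
    {τ : Finpartition (Finset.Icc 1 k)} {p : Finpartition (Finset.Icc 1 l)}
    (h1 : SetPartContains σ τ) (h2 : SetPartContains τ p) : SetPartContains σ p := by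
  obtain ⟨f, hf1, hf2, hf3⟩ := h1
  obtain ⟨g, hg1, hg2, hg3⟩ := h2
  exact ⟨f ∘ g, fun i hi => hf1 _ (hg1 i hi),
    fun i hi j hj hij => hf2 _ (hg1 i hi) _ (hg1 j hj) (hg2 i hi j hj hij),
    fun i hi j hj => (hg3 i hi j hj).trans (hf3 _ (hg1 i hi) _ (hg1 j hj))⟩

lemma sameBlock_permPartition {n : ℕ} {g : Equiv.Perm (Fin (n / 2))} {a b : ℕ}
    (hab : a < b) (h : SameBlock (permPartition n g) a b) : a ≤ n / 2 ∧ n / 2 < b := by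
  obtain ⟨B, hB, ha, hb⟩ := h
  rcases mem_permParts.1 hB with ⟨i, rfl⟩ | ⟨x, hx, rfl⟩
  · have hi : (i : ℕ) < n / 2 := i.isLt
    simp only [Finset.mem_insert, Finset.mem_singleton] at ha hb
    omega
  · simp only [Finset.mem_singleton] at ha hb
    omega

lemma not_contains_123 {n : ℕ} (g : Equiv.Perm (Fin (n / 2)))
    (p : Finpartition (Finset.Icc 1 3)) (hp : p.parts = {Finset.Icc 1 3}) :
    ¬ SetPartContains (permPartition n g) p := by
  rintro ⟨f, hf1, hf2, hf3⟩
  have m1 : (1 : ℕ) ∈ Finset.Icc 1 3 := by decide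
  have m2 : (2 : ℕ) ∈ Finset.Icc 1 3 := by decide
  have m3 : (3 : ℕ) ∈ Finset.Icc 1 3 := by decide
  have h12 : SameBlock p 1 2 := ⟨Finset.Icc 1 3, by rw [hp]; simp, m1, m2⟩
  have h23 : SameBlock p 2 3 := ⟨Finset.Icc 1 3, by rw [hp]; simp, m2, m3⟩
  have hf12 : f 1 < f 2 := hf2 1 m1 2 m2 (by norm_num)
  have hf23 : f 2 < f 3 := hf2 2 m2 3 m3 (by norm_num)
  have A1 := sameBlock_permPartition hf12 ((hf3 1 m1 2 m2).1 h12)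
  have A2 := sameBlock_permPartition hf23 ((hf3 2 m2 3 m3).1 h23)
  omega

lemma not_contains_12_34 {n : ℕ} (g : Equiv.Perm (Fin (n / 2)))
    (p : Finpartition (Finset.Icc 1 4))
    (hp : p.parts = ({({1, 2} : Finset ℕ), ({3, 4} : Finset ℕ)} : Finset (Finset ℕ))) :
    ¬ SetPartContains (permPartition n g) p := by
  rintro ⟨f, hf1, hf2, hf3⟩
  have m1 : (1 : ℕ) ∈ Finset.Icc 1 4 := by decide
  have m2 : (2 : ℕ) ∈ Finset.Icc 1 4 := by decide
  have m3 : (3 : ℕ) ∈ Finset.Icc 1 4 := by decide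
  have m4 : (4 : ℕ) ∈ Finset.Icc 1 4 := by decide
  have h12 : SameBlock p 1 2 := ⟨{1, 2}, by rw [hp]; simp, by simp, by simp⟩
  have h34 : SameBlock p 3 4 := ⟨{3, 4}, by rw [hp]; simp, by simp, by simp⟩
  have hf12 : f 1 < f 2 := hf2 1 m1 2 m2 (by norm_num)
  have hf23 : f 2 < f 3 := hf2 2 m2 3 m3 (by norm_num)
  have hf34 : f 3 < f 4 := hf2 3 m3 4 m4 (by norm_num)
  have A1 := sameBlock_permPartition hf12 ((hf3 1 m1 2 m2).1 h12)
  have A2 := sameBlock_permPartition hf34 ((hf3 3 m3 4 m4).1 h34)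
  omega

lemma permPartition_injective (n : ℕ) :
    Function.Injective (fun g : Equiv.Perm (Fin (n / 2)) => permPartition n g) := by
  intro g g' hgg
  have hparts : permParts n g = permParts n g' := congrArg Finpartition.parts hgg
  ext i
  have hmem : ({(i : ℕ) + 1, n / 2 + (g i : ℕ) + 1} : Finset ℕ) ∈ permParts n g' := by
    rw [← hparts]; exact mem_permParts.2 (Or.inl ⟨i, rfl⟩)
  have hi : (i : ℕ) < n / 2 := i.isLt
  have hgi : (g i : ℕ) < n / 2 := (g i).isLt
  rcases mem_permParts.1 hmem with ⟨j, hj⟩ | ⟨x, hx, hsing⟩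
  · have h1 : (i : ℕ) + 1 ∈ ({(j : ℕ) + 1, n / 2 + (g' j : ℕ) + 1} : Finset ℕ) := by
      rw [← hj]; simp
    have h2 : n / 2 + (g i : ℕ) + 1 ∈ ({(j : ℕ) + 1, n / 2 + (g' j : ℕ) + 1} : Finset ℕ) := by
      rw [← hj]; simp
    have hj' : (j : ℕ) < n / 2 := j.isLt
    simp only [Finset.mem_insert, Finset.mem_singleton] at h1 h2
    have hij : (i : ℕ) = (j : ℕ) := by omega
    have : (g i : ℕ) = (g' j : ℕ) := by omega
    rw [show j = i from Fin.ext hij.symm] at this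
    exact this
  · have h1 : (i : ℕ) + 1 ∈ ({x} : Finset ℕ) := by rw [← hsing]; simp
    simp only [Finset.mem_singleton] at h1
    omega

lemma factorial_le_A {n k : ℕ} (τ : Finpartition (Finset.Icc 1 k))
    (havoid : ∀ g : Equiv.Perm (Fin (n / 2)), ¬ SetPartContains (permPartition n g) τ) :
    Nat.factorial (n / 2) ≤ A n τ := by
  have hinj : Function.Injective
      (fun g : Equiv.Perm (Fin (n / 2)) =>
        (⟨permPartition n g, havoid g⟩ :
          {σ : Finpartition (Finset.Icc 1 n) // ¬ SetPartContains σ τ})) := by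
    intro g g' hgg
    exact permPartition_injective n (Subtype.mk_eq_mk.1 hgg)
  have := Nat.card_le_card_of_injective _ hinj
  rwa [Nat.card_eq_fintype_card, Fintype.card_perm, Fintype.card_fin] at this

/-- Upper bound: an avoider count is at most `n ^ n`. -/
lemma A_le {n k : ℕ} (τ : Finpartition (Finset.Icc 1 k)) : A n τ ≤ n ^ n := by
  classical
  set S := Finset.Icc 1 n with hS
  have hmin : ∀ (σ : Finpartition S) (x : ℕ), x ∈ S → (σ.part x).Nonempty := by
    intro σ x hx
    exact σ.nonempty_of_mem_parts (σ.part_mem.2 hx)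
  have mcongr : ∀ (s t : Finset ℕ) (hs : s.Nonempty) (ht : t.Nonempty), s = t →
      s.min' hs = t.min' ht := by rintro s t hs ht rfl; rfl
  let φ : {σ : Finpartition S // ¬ SetPartContains σ τ} → (S → S) := fun σ x =>
    ⟨(σ.1.part x).min' (hmin σ.1 x x.2), by
      have h1 : (σ.1.part x).min' (hmin σ.1 x x.2) ∈ σ.1.part x := Finset.min'_mem _ _
      exact (σ.1.le (σ.1.part_mem.2 x.2)) h1⟩
  have hφ : Function.Injective φ := by
    intro σ σ' hs
    have key : ∀ (x : ℕ) (hx : x ∈ S),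
        (σ.1.part x).min' (hmin σ.1 x hx) = (σ'.1.part x).min' (hmin σ'.1 x hx) := by
      intro x hx
      exact Subtype.ext_iff.1 (congrFun hs ⟨x, hx⟩)
    have hpart : ∀ (x : ℕ), x ∈ S → σ.1.part x = σ'.1.part x := by
      have main : ∀ (σ σ' : Finpartition S),
          (∀ (x : ℕ) (hx : x ∈ S), (σ.part x).min' (hmin σ x hx)
            = (σ'.part x).min' (hmin σ' x hx)) →
          ∀ (x : ℕ) (hx : x ∈ S), ∀ y ∈ σ.part x, y ∈ σ'.part x := by
        intro σ σ' hkey x hx y hy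
        have hyS : y ∈ S := (σ.le (σ.part_mem.2 hx)) hy
        have h1 : σ.part y = σ.part x := σ.part_eq_of_mem (σ.part_mem.2 hx) hy
        have h2 : (σ'.part y).min' (hmin σ' y hyS) = (σ'.part x).min' (hmin σ' x hx) := by
          rw [← hkey y hyS, ← hkey x hx]
          exact mcongr _ _ _ _ h1
        have h3 : (σ'.part y).min' (hmin σ' y hyS) ∈ σ'.part y := Finset.min'_mem _ _
        have h4 : (σ'.part x).min' (hmin σ' x hx) ∈ σ'.part x := Finset.min'_mem _ _
        rw [h2] at h3
        have h5 : σ'.part y = σ'.part x :=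
          σ'.eq_of_mem_parts (σ'.part_mem.2 hyS) (σ'.part_mem.2 hx) h3 h4
        rw [← h5]
        exact σ'.mem_part hyS
      intro x hx
      apply Finset.Subset.antisymm
      · intro y hy; exact main σ.1 σ'.1 key x hx y hy
      · intro y hy; exact main σ'.1 σ.1 (fun x hx => (key x hx).symm) x hx y hy
    apply Subtype.ext
    apply Finpartition.ext
    apply Finset.ext
    intro B
    constructor
    · intro hB
      obtain ⟨x, hxS, hpx⟩ := σ.1.part_surjOn hB
      have hxS' : x ∈ S := hxS
      rw [← hpx, hpart x hxS']
      exact σ'.1.part_mem.2 hxS'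
    · intro hB
      obtain ⟨x, hxS, hpx⟩ := σ'.1.part_surjOn hB
      have hxS' : x ∈ S := hxS
      rw [← hpx, ← hpart x hxS']
      exact σ.1.part_mem.2 hxS'
  calc A n τ ≤ Nat.card (S → S) := Nat.card_le_card_of_injective _ hφ
    _ = n ^ n := by
        rw [Nat.card_eq_fintype_card]
        simp [Fintype.card_fun, Fintype.card_coe, hS, Nat.card_Icc]

lemma log_factorial_lb (m : ℕ) :
    (m : ℝ) * Real.log m - m ≤ Real.log (Nat.factorial m) := by
  rcases Nat.eq_zero_or_pos m with rfl | hm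
  · simp
  · have hpos : (0 : ℝ) < m := by exact_mod_cast hm
    have key : (m : ℝ) ^ m / (Nat.factorial m) ≤ Real.exp m :=
      Real.pow_div_factorial_le_exp (x := (m : ℝ)) (le_of_lt hpos) m
    have hfac : (0 : ℝ) < (Nat.factorial m : ℝ) := by
      exact_mod_cast Nat.factorial_pos m
    have h2 : (m : ℝ) ^ m ≤ Real.exp m * Nat.factorial m := by
      rw [div_le_iff₀ hfac] at key; linarith [key]
    have h3 : Real.log ((m : ℝ) ^ m) ≤ Real.log (Real.exp m * Nat.factorial m) :=
      Real.log_le_log (pow_pos hpos m) h2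
    rw [Real.log_pow, Real.log_mul (Real.exp_ne_zero _) (ne_of_gt hfac),
      Real.log_exp] at h3
    push_cast at h3 ⊢
    linarith

lemma tendsto_half :
    Filter.Tendsto
      (fun n : ℕ => (((n / 2 : ℕ) : ℝ) * Real.log ((n / 2 : ℕ) : ℝ) - ((n / 2 : ℕ) : ℝ)) /
        ((n : ℝ) * Real.log n)) atTop (nhds (1 / 2)) := by
  set c : ℕ → ℝ := fun n => ((n / 2 : ℕ) : ℝ) with hc
  have h1 : Filter.Tendsto (fun n : ℕ => c n / n) atTop (nhds (1 / 2)) := by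
    apply tendsto_of_tendsto_of_tendsto_of_le_of_le'
      (g := fun n : ℕ => 1 / 2 - 1 / (n : ℝ)) (h := fun _ : ℕ => (1 : ℝ) / 2)
    · have h0 : Filter.Tendsto (fun n : ℕ => 1 / (n : ℝ)) atTop (nhds 0) :=
        tendsto_one_div_atTop_nhds_zero_nat
      have h0' := (tendsto_const_nhds :
        Filter.Tendsto (fun _ : ℕ => (1:ℝ)/2) atTop (nhds ((1:ℝ)/2))).sub h0
      simpa using h0'
    · exact tendsto_const_nhds
    · filter_upwards [Filter.eventually_ge_atTop 2] with n hn
      have hn0 : (0 : ℝ) < n := by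
        have : (0 : ℕ) < n := by omega
        exact_mod_cast this
      have hnat : n ≤ 2 * (n / 2) + 1 := by omega
      have hcl : (n : ℝ) ≤ 2 * c n + 1 := by
        simp only [hc]
        exact_mod_cast hnat
      rw [le_div_iff₀ hn0]
      have heq : (1 / 2 - 1 / (n : ℝ)) * n = n / 2 - 1 := by
        field_simp
      rw [heq]
      linarith
    · filter_upwards [Filter.eventually_ge_atTop 1] with n hn
      have hn0 : (0 : ℝ) < n := by
        have : (0 : ℕ) < n := by omega
        exact_mod_cast this
      have hnat : 2 * (n / 2) ≤ n := by omega
      have hcu : 2 * c n ≤ (n : ℝ) := by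
        simp only [hc]
        exact_mod_cast hnat
      rw [div_le_iff₀ hn0]
      linarith
  have hlog : Filter.Tendsto (fun n : ℕ => Real.log n) atTop atTop :=
    Real.tendsto_log_atTop.comp tendsto_natCast_atTop_atTop
  have h2 : Filter.Tendsto (fun n : ℕ => Real.log (c n / n)) atTop
      (nhds (Real.log (1 / 2))) :=
    ((Real.continuousAt_log (by norm_num)).tendsto).comp h1
  have h4 : Filter.Tendsto (fun n : ℕ => Real.log (c n / n) / Real.log n) atTop (nhds 0) :=
    h2.div_atTop hlog
  have h5 : Filter.Tendsto (fun n : ℕ => 1 / Real.log n) atTop (nhds 0) := by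
    exact hlog.inv_tendsto_atTop.congr (fun n => by simp [one_div])
  have main : Filter.Tendsto
      (fun n : ℕ => (c n / n) * (1 + Real.log (c n / n) / Real.log n - 1 / Real.log n))
      atTop (nhds ((1 / 2) * (1 + 0 - 0))) :=
    h1.mul ((tendsto_const_nhds.add h4).sub h5)
  have main' : Filter.Tendsto
      (fun n : ℕ => (c n / n) * (1 + Real.log (c n / n) / Real.log n - 1 / Real.log n))
      atTop (nhds (1 / 2)) := by
    convert main using 2
    norm_num
  apply main'.congr'
  filter_upwards [Filter.eventually_ge_atTop 4] with n hn
  have hn0 : (0 : ℝ) < n := by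
    have : (0 : ℕ) < n := by omega
    exact_mod_cast this
  have hcn : (0 : ℝ) < c n := by
    have : (0 : ℕ) < n / 2 := by omega
    simp only [hc]
    exact_mod_cast this
  have hln : 0 < Real.log n := Real.log_pos (by exact_mod_cast (by omega : (1:ℕ) < n))
  have hld : Real.log (c n / n) = Real.log (c n) - Real.log n :=
    Real.log_div (ne_of_gt hcn) (ne_of_gt hn0)
  rw [hld]
  field_simp
  ring

/-- If a set partition `τ` of `[k]` contains `123` (single block of size 3)
or `12/34` (blocks `{1,2}` and `{3,4}`), then
`liminf_{n→∞} log(A_n(τ)) / (n log n) ≥ 1/2`. -/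
theorem contains_pattern_liminf (k : ℕ) (τ : Finpartition (Finset.Icc 1 k))
    (h : (∃ p : Finpartition (Finset.Icc 1 3), p.parts = {Finset.Icc 1 3} ∧
            SetPartContains τ p) ∨
         (∃ p : Finpartition (Finset.Icc 1 4),
            p.parts = ({({1, 2} : Finset ℕ), ({3, 4} : Finset ℕ)} : Finset (Finset ℕ)) ∧
            SetPartContains τ p)) :
    (1 : ℝ) / 2 ≤
      Filter.liminf (fun n : ℕ => Real.log (A n τ) / ((n : ℝ) * Real.log n)) Filter.atTop := by
  set f : ℕ → ℝ := fun n : ℕ => Real.log (A n τ) / ((n : ℝ) * Real.log n) with hf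
  set gfun : ℕ → ℝ := fun n : ℕ =>
    (((n / 2 : ℕ) : ℝ) * Real.log ((n / 2 : ℕ) : ℝ) - ((n / 2 : ℕ) : ℝ)) /
      ((n : ℝ) * Real.log n) with hgfun
  have havoid : ∀ (n : ℕ) (g : Equiv.Perm (Fin (n / 2))),
      ¬ SetPartContains (permPartition n g) τ := by
    intro n g hcon
    rcases h with ⟨p, hp, hτp⟩ | ⟨p, hp, hτp⟩
    · exact not_contains_123 g p hp (setPartContains_trans hcon hτp)
    · exact not_contains_12_34 g p hp (setPartContains_trans hcon hτp)
  have hA1 : ∀ n, 1 ≤ A n τ := fun n =>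
    le_trans (Nat.one_le_iff_ne_zero.2 (Nat.factorial_ne_zero _)) (factorial_le_A τ (havoid n))
  have hf0 : ∀ n, 0 ≤ f n := fun n =>
    div_nonneg (Real.log_nonneg (by exact_mod_cast hA1 n))
      (mul_nonneg (Nat.cast_nonneg n) (Real.log_natCast_nonneg n))
  have hub : ∀ᶠ n in atTop, f n ≤ 1 := by
    filter_upwards [Filter.eventually_ge_atTop 2] with n hn
    have hln : 0 < Real.log n := Real.log_pos (by exact_mod_cast (by omega : (1:ℕ) < n))
    have hn0 : (0 : ℝ) < n := by
      have : (0 : ℕ) < n := by omega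
      exact_mod_cast this
    have hden : 0 < (n : ℝ) * Real.log n := mul_pos hn0 hln
    have hlogA : Real.log (A n τ) ≤ (n : ℝ) * Real.log n := by
      have h1 : Real.log (A n τ) ≤ Real.log ((n : ℝ) ^ n) := by
        apply Real.log_le_log (by exact_mod_cast hA1 n)
        exact_mod_cast A_le τ
      rwa [Real.log_pow] at h1
    rw [hf, div_le_one hden]
    exact hlogA
  have hcob : Filter.IsCoboundedUnder (· ≥ ·) atTop f :=
    Filter.isCoboundedUnder_ge_of_eventually_le atTop hub
  have hgle : ∀ᶠ n in atTop, gfun n ≤ f n := by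
    filter_upwards [Filter.eventually_ge_atTop 2] with n hn
    have hln : 0 < Real.log n := Real.log_pos (by exact_mod_cast (by omega : (1:ℕ) < n))
    have hn0 : (0 : ℝ) < n := by
      have : (0 : ℕ) < n := by omega
      exact_mod_cast this
    have hden : 0 < (n : ℝ) * Real.log n := mul_pos hn0 hln
    have hnum : ((n / 2 : ℕ) : ℝ) * Real.log ((n / 2 : ℕ) : ℝ) - ((n / 2 : ℕ) : ℝ) ≤
        Real.log (A n τ) := by
      refine le_trans (log_factorial_lb (n / 2)) ?_
      apply Real.log_le_log (by exact_mod_cast Nat.factorial_pos (n / 2))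
      exact_mod_cast factorial_le_A τ (havoid n)
    exact div_le_div_of_nonneg_right hnum hden.le |>.trans_eq rfl
  have hgl : Filter.liminf gfun atTop = 1 / 2 := tendsto_half.liminf_eq
  calc (1 : ℝ) / 2 = Filter.liminf gfun atTop := hgl.symm
    _ ≤ Filter.liminf f atTop :=
        Filter.liminf_le_liminf hgle tendsto_half.isBoundedUnder_ge hcob
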